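/- Let N ≥ 2 be a natural number, let δ be a real number with 1 − 1/(N−1) ≤ δ ≤ 1, and let w : Fin N → ℂ be a family of complex numbers, not all zero. Suppose that for every index i, if |w_i| ≥ (1−δ)·max_j |w_j|, then w_i is a nonnegative real number. Then the real part of Σ_i w_i is strictly positive. -/

import Mathlib

/-- Let `N ≥ 2`, let `1 − 1/(N−1) ≤ δ ≤ 1`, and let `w : Fin N → ℂ` be not
all zero.  If every `w i` whose modulus is at least `(1−δ)` times the maximal modulus is a
nonnegative real number, then the real part of `∑ i, w i` is strictly positive. -/
theorem statement12 (N : ℕ) (hN : 2 ≤ N) (δ : ℝ)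
    (hδ1 : 1 - 1 / ((N : ℝ) - 1) ≤ δ) (hδ2 : δ ≤ 1)
    (w : Fin N → ℂ) (hw : ∃ i, w i ≠ 0)
    (h : ∀ i : Fin N,
      (1 - δ) * (Finset.univ.sup' ⟨⟨0, by omega⟩, Finset.mem_univ _⟩
        fun j => ‖w j‖) ≤ ‖w i‖ →
      (w i).im = 0 ∧ 0 ≤ (w i).re) :
    0 < (∑ i, w i).re := by
  have hNe : (Finset.univ : Finset (Fin N)).Nonempty :=
    ⟨⟨0, by omega⟩, Finset.mem_univ _⟩
  set M : ℝ := Finset.univ.sup' hNe (fun j => ‖w j‖) with hMdef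
  have h' : ∀ i : Fin N, (1 - δ) * M ≤ ‖w i‖ →
      (w i).im = 0 ∧ 0 ≤ (w i).re := h
  obtain ⟨i0, -, hi0⟩ := Finset.exists_mem_eq_sup' hNe (fun j => ‖w j‖)
  rw [← hMdef] at hi0
  obtain ⟨k, hk⟩ := hw
  have hMpos : 0 < M :=
    lt_of_lt_of_le (norm_pos_iff.mpr hk)
      (Finset.le_sup' (fun j => ‖w j‖) (Finset.mem_univ k))
  have hc0 : (0:ℝ) < (N:ℝ) - 1 := by
    have : (2:ℝ) ≤ (N:ℝ) := by exact_mod_cast hN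
    linarith
  set c : ℝ := (N:ℝ) - 1 with hcdef
  have hδc : 1 - δ ≤ 1 / c := by linarith
  -- the maximizer has real part M
  have hc1 : (1:ℝ) ≤ c := by
    have : (2:ℝ) ≤ (N:ℝ) := by exact_mod_cast hN
    rw [hcdef]; linarith
  have hδ0 : 0 ≤ δ := by
    have : 1 / c ≤ 1 := by
      rw [div_le_one hc0]; exact hc1
    linarith
  have hi0' := h' i0 (by
    rw [← hi0]
    nlinarith)
  have hre0 : (w i0).re = M := by
    have hw0 : w i0 = ((w i0).re : ℂ) := by
      apply Complex.ext <;> simp [hi0'.1]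
    rw [hi0, hw0, Complex.norm_real, Real.norm_eq_abs, abs_of_nonneg hi0'.2]
    simp
  -- each other term has real part > -(M/c)
  have key : ∀ i ∈ Finset.univ.erase i0, -(M / c) < (w i).re := by
    intro i _
    by_cases hcase : (1 - δ) * M ≤ ‖w i‖
    · have := (h' i hcase).2
      have : 0 < M / c := div_pos hMpos hc0
      linarith [(h' i hcase).2]
    · push_neg at hcase
      have h1 : ‖w i‖ < M / c := by
        have : (1 - δ) * M ≤ (1 / c) * M := by
          apply mul_le_mul_of_nonneg_right hδc hMpos.le
        calc ‖w i‖ < (1 - δ) * M := hcase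
          _ ≤ (1 / c) * M := this
          _ = M / c := by ring
      have h2 : |(w i).re| ≤ ‖w i‖ := Complex.abs_re_le_norm (w i)
      have h3 : -|(w i).re| ≤ (w i).re := neg_abs_le _
      linarith
  have herase : Finset.card (Finset.univ.erase i0) = N - 1 := by
    rw [Finset.card_erase_of_mem (Finset.mem_univ i0)]
    simp
  have hsum : -M < ∑ i ∈ Finset.univ.erase i0, (w i).re := by
    have hne : (Finset.univ.erase i0).Nonempty := by
      rw [← Finset.card_pos, herase]; omega
    have := Finset.sum_lt_sum_of_nonempty hne key
    rw [Finset.sum_const, herase, nsmul_eq_mul] at this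
    have hcast : ((N - 1 : ℕ) : ℝ) = c := by
      rw [hcdef, Nat.cast_sub (by omega)]; simp
    rw [hcast] at this
    have : c * -(M / c) = -M := by field_simp
    linarith [Finset.sum_lt_sum_of_nonempty hne key, this]
  have hsplit : (∑ i, w i).re = (w i0).re + ∑ i ∈ Finset.univ.erase i0, (w i).re := by
    rw [Complex.re_sum, ← Finset.add_sum_erase _ _ (Finset.mem_univ i0)]
  rw [hsplit, hre0]
  linarith
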